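/- If H is a noncentral chi-squared random variable with k degrees of freedom and noncentrality parameter ν, then for any y > 0, P(H ≥ k + ν − 2√((k + 2ν)y)) ≥ 1 − exp(−y). -/

import Mathlib

open MeasureTheory ProbabilityTheory Real
open scoped NNReal ENNReal

lemma log_quad {u : ℝ} (hu : 0 ≤ u) : u - u ^ 2 / 2 ≤ Real.log (1 + u) := by
  have hderiv : ∀ x : ℝ, 0 < x → HasDerivAt (fun u : ℝ => Real.log (1 + u) - u + u ^ 2 / 2)
      ((1 + x)⁻¹ - 1 + x) x := by
    intro x hx
    have hx1 : (0:ℝ) < 1 + x := by linarith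
    have h1 : HasDerivAt (fun u : ℝ => 1 + u) 1 x := by
      simpa using (hasDerivAt_id x).const_add 1
    have h2 : HasDerivAt (fun u : ℝ => Real.log (1 + u)) (1 / (1 + x)) x := by
      simpa [Function.comp_def] using (Real.hasDerivAt_log hx1.ne').comp x h1
    have h3 : HasDerivAt (fun u : ℝ => u ^ 2 / 2) x x := by
      simpa using ((hasDerivAt_pow 2 x).div_const 2)
    have h4 := (h2.sub (hasDerivAt_id x)).add h3
    simp only [one_div] at h4
    exact h4
  have key : MonotoneOn (fun u : ℝ => Real.log (1 + u) - u + u ^ 2 / 2) (Set.Ici 0) := by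
    apply monotoneOn_of_deriv_nonneg (convex_Ici 0)
    · apply ContinuousOn.add
      · apply ContinuousOn.sub
        · apply ContinuousOn.log (by fun_prop)
          intro x hx; simp only [Set.mem_Ici] at hx; nlinarith
        · exact continuousOn_id
      · fun_prop
    · intro x hx
      simp only [interior_Ici, Set.mem_Ioi] at hx
      exact ((hderiv x hx).differentiableAt).differentiableWithinAt
    · intro x hx
      simp only [interior_Ici, Set.mem_Ioi] at hx
      rw [(hderiv x hx).deriv]
      have hx1 : (0:ℝ) < 1 + x := by linarith
      have : (1 + x)⁻¹ - 1 + x = x^2/(1+x) := by field_simp; ring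
      rw [this]
      positivity
  have := key (Set.self_mem_Ici) (Set.mem_Ici.mpr hu) hu
  simp only [Real.log_one, add_zero] at this
  nlinarith [this]

lemma gauss_int (t a : ℝ) (ht : 0 ≤ t) :
    ∫ x, Real.exp (-t * (x + a) ^ 2) ∂(gaussianReal 0 1) =
      Real.exp (-(t * a ^ 2) / (1 + 2 * t)) / Real.sqrt (1 + 2 * t) := by
  have h2t : (0:ℝ) < 1 + 2 * t := by linarith
  rw [gaussianReal_of_var_ne_zero 0 one_ne_zero]
  have hpdf : gaussianPDF 0 1 = fun x => ((Real.toNNReal (gaussianPDFReal 0 1 x) : ℝ≥0) : ℝ≥0∞) := by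
    funext x; rw [gaussianPDF, ENNReal.ofReal]
  rw [hpdf]
  rw [integral_withDensity_eq_integral_smul
    ((measurable_gaussianPDFReal 0 1).real_toNNReal)]
  have hps : ∀ x : ℝ, (Real.toNNReal (gaussianPDFReal 0 1 x)) • Real.exp (-t * (x + a) ^ 2)
      = (Real.sqrt (2 * π))⁻¹ * Real.exp (-(t*a^2)/(1+2*t)) *
        Real.exp (-((1+2*t)/2) * (x + 2*t*a/(1+2*t)) ^ 2) := by
    intro x
    rw [NNReal.smul_def, Real.coe_toNNReal _ (gaussianPDFReal_nonneg 0 1 x)]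
    rw [gaussianPDFReal]
    push_cast
    rw [smul_eq_mul, mul_assoc, ← Real.exp_add,
      mul_assoc ((Real.sqrt (2 * π))⁻¹), ← Real.exp_add]
    congr 2
    · norm_num
    · field_simp
      ring
  simp_rw [hps]
  rw [integral_const_mul]
  rw [integral_add_right_eq_self (fun u => Real.exp (-((1+2*t)/2) * u ^ 2)) (2*t*a/(1+2*t))]
  rw [integral_gaussian]
  rw [show π / ((1 + 2 * t)/2) = 2 * π / (1 + 2*t) by field_simp,
    Real.sqrt_div (by positivity : (0:ℝ) ≤ 2 * π)]
  have h3 : Real.sqrt (2*π) ≠ 0 := by positivity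
  field_simp

lemma factor_bound (t a : ℝ) (ht : 0 ≤ t) :
    Real.exp (-(t * a ^ 2) / (1 + 2 * t)) / Real.sqrt (1 + 2 * t) ≤
      Real.exp (-t * (1 + a ^ 2) + t ^ 2 * (1 + 2 * a ^ 2)) := by
  have h2t : (0:ℝ) < 1 + 2 * t := by linarith
  have hlog : 2 * t - 2 * t ^ 2 ≤ Real.log (1 + 2 * t) := by
    have := log_quad (by linarith : (0:ℝ) ≤ 2 * t)
    nlinarith [this]
  rw [div_le_iff₀ (by positivity)]
  rw [← Real.exp_log (Real.sqrt_pos.mpr h2t), Real.log_sqrt h2t.le, ← Real.exp_add]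
  rw [Real.exp_le_exp]
  have key : -(t * a ^ 2) / (1 + 2 * t) ≤ -(t * a^2) + 2 * t^2 * a^2 := by
    rw [div_le_iff₀ h2t]
    nlinarith [mul_nonneg (mul_nonneg (mul_nonneg ht ht) ht) (sq_nonneg a)]
  nlinarith

lemma iIndepFun_ae_eq' {Ω : Type*} [MeasurableSpace Ω] {μ : Measure Ω} {ι : Type*}
    {β : ι → Type*} [m : ∀ i, MeasurableSpace (β i)] {f g : ∀ i, Ω → β i}
    (hf : iIndepFun f μ) (hfg : ∀ i, f i =ᵐ[μ] g i) : iIndepFun g μ := by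
  rw [iIndepFun_iff_measure_inter_preimage_eq_mul] at hf ⊢
  intro S sets hmeas
  have h1 : ∀ i, g i ⁻¹' sets i =ᵐ[μ] f i ⁻¹' sets i :=
    fun i => ((hfg i).symm.fun_comp (sets i))
  have h2 : (⋂ i ∈ S, g i ⁻¹' sets i) =ᵐ[μ] ⋂ i ∈ S, f i ⁻¹' sets i :=
    EventuallyEq.countable_bInter (S : Set ι).to_countable (fun i _ => h1 i)
  rw [measure_congr h2, hf S hmeas]
  exact Finset.prod_congr rfl fun i _ => measure_congr (h1 i).symm

/-- Birgé lower-tail bound for a noncentral chi-squared random variable with `k`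
degrees of freedom and noncentrality `ν`, realised as `H = Σ (Z i + a i)^2` with
`Z i` i.i.d. standard Gaussians and `Σ (a i)^2 = ν`. -/
theorem noncentral_chisq_lower_tail
    {Ω : Type*} [MeasureSpace Ω] [IsProbabilityMeasure (ℙ : Measure Ω)]
    (k : ℕ) (Z : Fin k → Ω → ℝ)
    (hindep : iIndepFun Z ℙ)
    (hlaw : ∀ i, Measure.map (Z i) ℙ = gaussianReal 0 1)
    (a : Fin k → ℝ) (ν : ℝ) (hν : ∑ i, (a i) ^ 2 = ν)
    (H : Ω → ℝ) (hH : ∀ ω, H ω = ∑ i, (Z i ω + a i) ^ 2)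
    (y : ℝ) (hy : 0 < y) :
    ENNReal.ofReal (1 - Real.exp (-y)) ≤
      ℙ {ω | (k : ℝ) + ν - 2 * Real.sqrt ((k + 2 * ν) * y) ≤ H ω} := by
  have hν0 : 0 ≤ ν := hν ▸ Finset.sum_nonneg fun i _ => sq_nonneg _
  rcases Nat.eq_zero_or_pos k with hk | hk
  · -- k = 0 : H = 0, threshold = 0
    subst hk
    have hν' : ν = 0 := by simpa using hν.symm
    have : {ω | ((0:ℕ) : ℝ) + ν - 2 * Real.sqrt ((((0:ℕ):ℝ) + 2 * ν) * y) ≤ H ω} = Set.univ := by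
      ext ω
      simp [hν', hH ω]
    rw [this, measure_univ]
    exact ENNReal.ofReal_le_one.mpr (by nlinarith [Real.exp_pos (-y)])
  -- main case
  set s : ℝ := (k : ℝ) + 2 * ν with hs_def
  have hs : 0 < s := by
    have : (1:ℝ) ≤ (k:ℝ) := by exact_mod_cast hk
    simp only [hs_def]; linarith
  set t : ℝ := Real.sqrt (y / s) with ht_def
  have ht : 0 < t := Real.sqrt_pos.mpr (div_pos hy hs)
  have ht2 : t ^ 2 = y / s := Real.sq_sqrt (div_pos hy hs).le
  have ht2s : t ^ 2 * s = y := by rw [ht2]; field_simp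
  have htsy : t * Real.sqrt (s * y) = y := by
    rw [ht_def, ← Real.sqrt_mul (div_pos hy hs).le]
    rw [show y / s * (s * y) = y ^ 2 by field_simp]
    exact Real.sqrt_sq hy.le
  -- measurable modifications
  have haem : ∀ i, AEMeasurable (Z i) ℙ := by
    intro i
    by_contra h
    have h0 := Measure.map_of_not_aemeasurable h
    rw [hlaw i] at h0
    exact IsProbabilityMeasure.ne_zero (gaussianReal 0 1) h0
  set Z' : Fin k → Ω → ℝ := fun i => (haem i).mk (Z i) with hZ'_def
  have hZ'm : ∀ i, Measurable (Z' i) := fun i => (haem i).measurable_mk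
  have hZe : ∀ i, Z i =ᵐ[ℙ] Z' i := fun i => (haem i).ae_eq_mk
  have hlaw' : ∀ i, Measure.map (Z' i) ℙ = gaussianReal 0 1 := by
    intro i
    rw [← Measure.map_congr (hZe i)]
    exact hlaw i
  have hindep' : iIndepFun Z' ℙ := iIndepFun_ae_eq' hindep hZe
  set W : Fin k → Ω → ℝ := fun i ω => (Z' i ω + a i) ^ 2 with hW_def
  have hWm : ∀ i, Measurable (W i) := fun i => ((hZ'm i).add_const (a i)).pow_const 2
  have hWindep : iIndepFun W ℙ := by
    have := hindep'.comp (fun i x => (x + a i) ^ 2)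
      (fun i => (measurable_id.add_const (a i)).pow_const 2)
    exact this
  have hWnn : ∀ i ω, 0 ≤ W i ω := fun i ω => sq_nonneg _
  -- integrability
  have hInt : ∀ i, Integrable (fun ω => Real.exp (-t * W i ω)) ℙ := by
    intro i
    refine Integrable.mono' (integrable_const 1)
      ((((hWm i).const_mul (-t)).exp).aestronglyMeasurable) (ae_of_all _ fun ω => ?_)
    rw [Real.norm_eq_abs, abs_of_pos (Real.exp_pos _)]
    rw [← Real.exp_zero]
    apply Real.exp_le_exp.mpr
    have := hWnn i ω
    nlinarith
  -- mgf of each factor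
  have hmgf_i : ∀ i, mgf (W i) ℙ (-t) =
      Real.exp (-(t * (a i) ^ 2) / (1 + 2 * t)) / Real.sqrt (1 + 2 * t) := by
    intro i
    rw [mgf]
    have heq : ∀ ω, Real.exp (-t * W i ω) = (fun x => Real.exp (-t * (x + a i) ^ 2)) (Z' i ω) :=
      fun ω => rfl
    calc ∫ ω, Real.exp (-t * W i ω) ∂ℙ
        = ∫ x, Real.exp (-t * (x + a i) ^ 2) ∂(Measure.map (Z' i) ℙ) := by
          rw [integral_map (hZ'm i).aemeasurable]
          · exact ((measurable_id.add_const (a i)).pow_const 2).const_mul (-t)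
              |>.exp.aestronglyMeasurable
      _ = Real.exp (-(t * (a i) ^ 2) / (1 + 2 * t)) / Real.sqrt (1 + 2 * t) := by
          rw [hlaw' i]; exact gauss_int t (a i) ht.le
  -- mgf of sum and product bound
  have hmgf_sum : mgf (∑ i, W i) ℙ (-t) ≤ Real.exp (-t * ((k:ℝ) + ν) + t ^ 2 * s) := by
    rw [hWindep.mgf_sum hWm Finset.univ]
    calc ∏ i, mgf (W i) ℙ (-t)
        ≤ ∏ i, Real.exp (-t * (1 + (a i) ^ 2) + t ^ 2 * (1 + 2 * (a i) ^ 2)) := by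
          apply Finset.prod_le_prod
          · intro i _; rw [hmgf_i i]; positivity
          · intro i _; rw [hmgf_i i]; exact factor_bound t (a i) ht.le
      _ = Real.exp (∑ i, (-t * (1 + (a i) ^ 2) + t ^ 2 * (1 + 2 * (a i) ^ 2))) :=
          (Real.exp_sum _ _).symm
      _ = Real.exp (-t * ((k:ℝ) + ν) + t ^ 2 * s) := by
          congr 1
          have : ∀ i : Fin k, -t * (1 + (a i) ^ 2) + t ^ 2 * (1 + 2 * (a i) ^ 2)
              = (-t + t ^ 2) + (-t + 2 * t ^ 2) * (a i) ^ 2 := fun i => by ring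
          rw [Finset.sum_congr rfl fun i _ => this i, Finset.sum_add_distrib,
            Finset.sum_const, ← Finset.mul_sum, hν, Finset.card_univ, Fintype.card_fin,
            nsmul_eq_mul, hs_def]
          ring
  -- Chernoff
  set m : ℝ := (k : ℝ) + ν - 2 * Real.sqrt (s * y) with hm_def
  have hcher : (ℙ {ω | (∑ i, W i) ω ≤ m}).toReal ≤ Real.exp (-y) := by
    have h1 := measure_le_le_exp_mul_mgf (μ := ℙ) (X := ∑ i, W i) m
      (neg_nonpos.mpr ht.le)
      (hWindep.integrable_exp_mul_sum hWm (fun i _ => hInt i))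
    refine h1.trans ?_
    calc Real.exp (-(-t) * m) * mgf (∑ i, W i) ℙ (-t)
        ≤ Real.exp (-(-t) * m) * Real.exp (-t * ((k:ℝ) + ν) + t ^ 2 * s) := by
          apply mul_le_mul_of_nonneg_left hmgf_sum (Real.exp_pos _).le
      _ = Real.exp (t * m - t * ((k:ℝ) + ν) + t ^ 2 * s) := by
          rw [← Real.exp_add]; ring_nf
      _ = Real.exp (-y) := by
          congr 1
          rw [hm_def]
          have : t * ((k:ℝ) + ν - 2 * Real.sqrt (s * y)) - t * ((k:ℝ) + ν) + t ^ 2 * s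
              = -2 * (t * Real.sqrt (s * y)) + t ^ 2 * s := by ring
          rw [this, htsy, ht2s]; ring
  -- transfer to H
  have hHae : ∀ᵐ ω ∂ℙ, H ω = (∑ i, W i) ω := by
    have hall : ∀ᵐ ω ∂ℙ, ∀ i, Z i ω = Z' i ω := ae_all_iff.mpr fun i => hZe i
    filter_upwards [hall] with ω hω
    rw [hH ω, Finset.sum_apply]
    exact Finset.sum_congr rfl fun i _ => by rw [hω i]
  have hsetae : {ω | H ω ≤ m} =ᵐ[ℙ] {ω | (∑ i, W i) ω ≤ m} := by
    filter_upwards [hHae] with ω hω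
    exact congrArg (fun z => z ≤ m) hω
  have hle : ℙ {ω | H ω ≤ m} ≤ ENNReal.ofReal (Real.exp (-y)) := by
    rw [measure_congr hsetae]
    rw [ENNReal.le_ofReal_iff_toReal_le (measure_ne_top _ _) (Real.exp_pos _).le]
    exact hcher
  -- conclude
  have hsub : {ω | (k : ℝ) + ν - 2 * Real.sqrt (((k:ℝ) + 2 * ν) * y) ≤ H ω}ᶜ ⊆ {ω | H ω ≤ m} := by
    intro ω hω
    simp only [Set.mem_compl_iff, Set.mem_setOf_eq, not_le] at hω
    simp only [Set.mem_setOf_eq, hm_def, hs_def]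
    linarith
  set A := {ω | (k : ℝ) + ν - 2 * Real.sqrt (((k:ℝ) + 2 * ν) * y) ≤ H ω} with hA_def
  have hunion : (1 : ℝ≥0∞) ≤ ℙ A + ℙ Aᶜ := by
    calc (1 : ℝ≥0∞) = ℙ (A ∪ Aᶜ) := by rw [Set.union_compl_self, measure_univ]
      _ ≤ ℙ A + ℙ Aᶜ := measure_union_le A Aᶜ
  have hAc : ℙ Aᶜ ≤ ENNReal.ofReal (Real.exp (-y)) := (measure_mono hsub).trans hle
  calc ENNReal.ofReal (1 - Real.exp (-y))
      = 1 - ENNReal.ofReal (Real.exp (-y)) := by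
        rw [ENNReal.ofReal_sub _ (Real.exp_pos _).le, ENNReal.ofReal_one]
    _ ≤ 1 - ℙ Aᶜ := tsub_le_tsub_left hAc 1
    _ ≤ ℙ A := tsub_le_iff_right.mpr hunion
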